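/- arXiv:1611.07843 — 7 statements merged into one kernel-verified Lean document; each statement's English description precedes it below -/
import Mathlib

section
/- The functions a(t) = (1/(2γ))(log(g(t)/g(T)) − (T−t)g(T)) and b(t) = (1/(γσ²))(T−t)g(T)/g(t) are C¹ on [0,T] and satisfy the system of ODEs a′(t) + (1/2)σ²g(t)²b(t) = 0 and b′(t) + 1/(γσ²) − 2g(t)b(t) = 0 on [0,T], with terminal conditions a(T) = 0 and b(T) = 0. -/
noncomputable section

open Set

theorem stmt2
    (T σ ν₀ γ : ℝ) (hT : 0 < T) (hσ : 0 < σ) (hν : 0 < ν₀) (hγ : 0 < γ)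
    (g : ℝ → ℝ) (hg : ∀ t, g t = ν₀^2 / (σ^2 + ν₀^2 * t))
    (a b : ℝ → ℝ)
    (ha : ∀ t, a t = (1/(2*γ)) * (Real.log (g t / g T) - (T - t) * g T))
    (hb : ∀ t, b t = (1/(γ*σ^2)) * (T - t) * g T / g t) :
    -- a and b are C¹ on [0,T] and satisfy the ODE system there
    (∀ t ∈ Icc (0:ℝ) T,
      HasDerivAt a (-((1/2) * σ^2 * (g t)^2 * b t)) t
      ∧ HasDerivAt b (-(1/(γ*σ^2) - 2 * g t * b t)) t)
    -- the derivative functions are continuous on [0,T]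
    ∧ ContinuousOn (fun t => -((1/2) * σ^2 * (g t)^2 * b t)) (Icc 0 T)
    ∧ ContinuousOn (fun t => -(1/(γ*σ^2) - 2 * g t * b t)) (Icc 0 T)
    -- terminal conditions
    ∧ a T = 0 ∧ b T = 0 := by
  have hσ2 : (0:ℝ) < σ^2 := by positivity
  have hν2 : (0:ℝ) < ν₀^2 := by positivity
  have hDT : 0 < σ^2 + ν₀^2 * T := by nlinarith
  have hgT : 0 < g T := by rw [hg]; positivity
  have hcontD : Continuous (fun s : ℝ => σ^2 + ν₀^2 * s) := by fun_prop
  refine ⟨?_, ?_, ?_, ?_, ?_⟩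
  · intro t ht
    obtain ⟨ht0, htT⟩ := ht
    have hDt : 0 < σ^2 + ν₀^2 * t := by nlinarith
    have hev : ∀ᶠ s in nhds t, 0 < σ^2 + ν₀^2 * s :=
      Filter.eventually_of_mem ((isOpen_lt continuous_const hcontD).mem_nhds hDt)
        (fun s hs => hs)
    have h1 : HasDerivAt (fun s : ℝ => σ^2 + ν₀^2 * s) (ν₀^2) t := by
      simpa using ((hasDerivAt_id t).const_mul (ν₀^2)).const_add (σ^2)
    constructor
    · -- derivative of a
      have haev : (fun s => (1/(2*γ)) * (Real.log (σ^2+ν₀^2*T) -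
          Real.log (σ^2+ν₀^2*s) - (T - s) * g T)) =ᶠ[nhds t] a := by
        filter_upwards [hev] with s hs
        rw [ha, hg s, hg T]
        have h2 : ν₀^2 / (σ^2+ν₀^2*s) / (ν₀^2/(σ^2+ν₀^2*T))
            = (σ^2+ν₀^2*T)/(σ^2+ν₀^2*s) := by
          field_simp
        rw [h2, Real.log_div hDT.ne' hs.ne']
      have hF : HasDerivAt (fun s => (1/(2*γ)) * (Real.log (σ^2+ν₀^2*T) -
          Real.log (σ^2+ν₀^2*s) - (T - s) * g T))
          ((1/(2*γ)) * (0 - ν₀^2/(σ^2+ν₀^2*t) - (0 - 1) * g T)) t := by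
        exact ((((hasDerivAt_const t (Real.log (σ^2+ν₀^2*T))).sub
          (h1.log hDt.ne')).sub
          (((hasDerivAt_const t T).sub (hasDerivAt_id t)).mul_const (g T))).const_mul _)
      have := hF.congr_of_eventuallyEq haev.symm
      refine this.congr_deriv ?_
      rw [hb, hg t, hg T]
      field_simp
      ring
    · -- derivative of b
      have hbev : (fun s => (g T/(γ*σ^2*ν₀^2)) * ((T-s)*(σ^2+ν₀^2*s)))
          =ᶠ[nhds t] b := by
        filter_upwards [hev] with s hs
        rw [hb, hg s]
        field_simp
      have hF : HasDerivAt (fun s => (g T/(γ*σ^2*ν₀^2)) * ((T-s)*(σ^2+ν₀^2*s)))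
          ((g T/(γ*σ^2*ν₀^2)) * ((0-1)*(σ^2+ν₀^2*t) + (T-t)*ν₀^2)) t := by
        have hp : HasDerivAt (fun s : ℝ => (T-s)*(σ^2+ν₀^2*s))
            ((0-1)*(σ^2+ν₀^2*t) + (T-t)*ν₀^2) t :=
          ((hasDerivAt_const t T).sub (hasDerivAt_id t)).mul h1
        exact hp.const_mul _
      have := hF.congr_of_eventuallyEq hbev.symm
      refine this.congr_deriv ?_
      rw [hb, hg t, hg T]
      field_simp
      ring
  · -- continuity 1
    have hDne : ∀ t ∈ Icc (0:ℝ) T, σ^2 + ν₀^2 * t ≠ 0 := by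
      intro t ht
      have : 0 < σ^2 + ν₀^2 * t := by nlinarith [ht.1]
      exact this.ne'
    have hgc : ContinuousOn g (Icc 0 T) := by
      have : g = fun t => ν₀^2 / (σ^2 + ν₀^2 * t) := funext hg
      rw [this]
      exact ContinuousOn.div continuousOn_const hcontD.continuousOn hDne
    have hgne : ∀ t ∈ Icc (0:ℝ) T, g t ≠ 0 := by
      intro t ht
      rw [hg]
      have := hDne t ht
      positivity
    have hbc : ContinuousOn b (Icc 0 T) := by
      have : b = fun t => (1/(γ*σ^2)) * (T - t) * g T / g t := funext hb
      rw [this]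
      exact ContinuousOn.div (by fun_prop) hgc hgne
    fun_prop
  · have hDne : ∀ t ∈ Icc (0:ℝ) T, σ^2 + ν₀^2 * t ≠ 0 := by
      intro t ht
      have : 0 < σ^2 + ν₀^2 * t := by nlinarith [ht.1]
      exact this.ne'
    have hgc : ContinuousOn g (Icc 0 T) := by
      have : g = fun t => ν₀^2 / (σ^2 + ν₀^2 * t) := funext hg
      rw [this]
      exact ContinuousOn.div continuousOn_const hcontD.continuousOn hDne
    have hgne : ∀ t ∈ Icc (0:ℝ) T, g t ≠ 0 := by
      intro t ht
      rw [hg]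
      have := hDne t ht
      positivity
    have hbc : ContinuousOn b (Icc 0 T) := by
      have : b = fun t => (1/(γ*σ^2)) * (T - t) * g T / g t := funext hb
      rw [this]
      exact ContinuousOn.div (by fun_prop) hgc hgne
    fun_prop
  · rw [ha, div_self hgT.ne', Real.log_one]; ring
  · rw [hb]; simp
end
end

section
/- Define u(t,V,β) = −exp(−γ(e^{r(T−t)}V + (1/(2γ))(log(g(t)/g(T)) − (T−t)g(T)) + (1/(2γσ²))(T−t)(g(T)/g(t))(β−r)²)). Then u satisfies, on [0,T]×ℝ×ℝ, the HJB equation −∂_t u − (1/2)σ²g(t)²∂²_{ββ}u − sup_{M∈ℝ}{((β−r)M + rV)∂_V u + (1/2)σ²M²∂²_{VV}u + σ²g(t)M∂²_{Vβ}u} = 0 with terminal condition u(T,V,β) = −exp(−γV), and the supremum is attained at M* = e^{−r(T−t)}(g(T)/g(t))(β−r)/(γσ²). -/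
noncomputable section

open Set

lemma hasDerivAt_negexp {f : ℝ → ℝ} {f' : ℝ} {x : ℝ} (hf : HasDerivAt f f' x) :
    HasDerivAt (fun x => -Real.exp (f x)) (-f' * Real.exp (f x)) x := by
  simpa [neg_mul, mul_comm] using hf.exp.fun_neg

lemma hasDerivAt_mulexp {f g : ℝ → ℝ} {f' g' : ℝ} {x : ℝ} (hf : HasDerivAt f f' x)
    (hg : HasDerivAt g g' x) :
    HasDerivAt (fun x => f x * Real.exp (g x)) ((f' + f x * g') * Real.exp (g x)) x := by
  have := hf.fun_mul hg.exp
  exact this.congr_deriv (by ring)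


/-- ∂ₜ for a function u(t,V,β). -/
def updt (u : ℝ → ℝ → ℝ → ℝ) (t V β : ℝ) : ℝ := deriv (fun s => u s V β) t
/-- ∂_V for a function u(t,V,β). -/
def updV (u : ℝ → ℝ → ℝ → ℝ) (t V β : ℝ) : ℝ := deriv (fun x => u t x β) V
/-- ∂_β for a function u(t,V,β). -/
def updb (u : ℝ → ℝ → ℝ → ℝ) (t V β : ℝ) : ℝ := deriv (fun y => u t V y) β
/-- ∂²_{VV} for a function u(t,V,β). -/
def updVV (u : ℝ → ℝ → ℝ → ℝ) (t V β : ℝ) : ℝ := deriv (fun x => updV u t x β) V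
/-- ∂²_{ββ} for a function u(t,V,β). -/
def updbb (u : ℝ → ℝ → ℝ → ℝ) (t V β : ℝ) : ℝ := deriv (fun y => updb u t V y) β
/-- ∂²_{Vβ} for a function u(t,V,β). -/
def updVb (u : ℝ → ℝ → ℝ → ℝ) (t V β : ℝ) : ℝ := deriv (fun y => updV u t V y) β

/-- The quantity inside the supremum of the CARA HJB equation. -/
def hamM (σ r gt : ℝ) (u : ℝ → ℝ → ℝ → ℝ) (t V β M : ℝ) : ℝ :=
  ((β - r) * M + r * V) * updV u t V β + (1/2) * σ^2 * M^2 * updVV u t V β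
    + σ^2 * gt * M * updVb u t V β

set_option maxHeartbeats 2000000 in
theorem stmt3
    (T r σ ν₀ γ : ℝ) (hT : 0 < T) (hσ : 0 < σ) (hν : 0 < ν₀) (hγ : 0 < γ)
    (g : ℝ → ℝ) (hg : ∀ t, g t = ν₀^2 / (σ^2 + ν₀^2 * t))
    (u : ℝ → ℝ → ℝ → ℝ)
    (hu : ∀ t V β : ℝ, u t V β =
      -Real.exp (-γ * (Real.exp (r*(T-t)) * V
        + (1/(2*γ)) * (Real.log (g t / g T) - (T - t) * g T)
        + (1/(2*γ*σ^2)) * (T - t) * (g T / g t) * (β - r)^2))) :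
    (∀ t ∈ Icc (0:ℝ) T, ∀ V β : ℝ,
      -- the supremum in the HJB equation is attained at M*
      IsGreatest (Set.range (hamM σ r (g t) u t V β))
        (hamM σ r (g t) u t V β
          (Real.exp (-(r*(T-t))) * (g T / g t) * (β - r) / (γ*σ^2)))
      ∧
      -- the HJB equation holds
      -updt u t V β - (1/2) * σ^2 * (g t)^2 * updbb u t V β
        - hamM σ r (g t) u t V β
            (Real.exp (-(r*(T-t))) * (g T / g t) * (β - r) / (γ*σ^2)) = 0)
    ∧
    -- terminal condition
    (∀ V β : ℝ, u T V β = -Real.exp (-γ * V)) := by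
  have hσ2 : (0:ℝ) < σ^2 := by positivity
  have hγ' : γ ≠ 0 := ne_of_gt hγ
  have hσ' : σ ≠ 0 := ne_of_gt hσ
  have hν2 : (ν₀:ℝ)^2 ≠ 0 := by positivity
  have ha : (0:ℝ) < σ^2 + ν₀^2*T := by nlinarith [mul_pos (pow_pos hν 2) hT]
  have ha' : (σ^2 + ν₀^2*T) ≠ 0 := ne_of_gt ha
  have hgdiv' : ∀ s, g T / g s = (σ^2 + ν₀^2*s) / (σ^2 + ν₀^2*T) := by
    intro s; rw [hg, hg, div_div_div_comm, div_self hν2, one_div_div]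
  have hu' : ∀ s x y : ℝ, u s x y =
      -Real.exp (-γ * (Real.exp (r*(T-s)) * x
        + (1/(2*γ)) * (Real.log ((σ^2+ν₀^2*T)/(σ^2+ν₀^2*s)) - (T - s) * (ν₀^2/(σ^2+ν₀^2*T)))
        + (1/(2*γ*σ^2)) * ((T - s) * ((σ^2+ν₀^2*s)/(σ^2+ν₀^2*T))) * (y - r)^2)) := by
    have hgdiv : ∀ s, g s / g T = (σ^2 + ν₀^2*T) / (σ^2 + ν₀^2*s) := by
      intro s; rw [hg, hg, div_div_div_comm, div_self hν2, one_div_div]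
    intro s x y
    rw [hu, hgdiv, hgdiv', hg]
    ring_nf
  constructor
  · intro t ht V β
    obtain ⟨ht0, htT⟩ := ht
    have hdt : (0:ℝ) < σ^2 + ν₀^2*t := by nlinarith [mul_nonneg (sq_nonneg ν₀) ht0]
    have hdt' : (σ^2 + ν₀^2*t) ≠ 0 := ne_of_gt hdt
    have hut3 : ∀ x y : ℝ, u t x y =
      -Real.exp (-γ * (Real.exp (r*(T-t)) * x
        + (1/(2*γ)) * (Real.log ((σ^2+ν₀^2*T)/(σ^2+ν₀^2*t)) - (T - t) * (ν₀^2/(σ^2+ν₀^2*T)))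
        + (1/(2*γ*σ^2)) * ((T - t) * ((σ^2+ν₀^2*t)/(σ^2+ν₀^2*T))) * (y - r)^2)) :=
      fun x y => hu' t x y
    set a : ℝ := σ^2 + ν₀^2*T with hadef
    set dd : ℝ := σ^2 + ν₀^2*t with hdddef
    set E : ℝ := Real.exp (r*(T-t)) with hEdef
    have hE0 : 0 < E := by rw [hEdef]; exact Real.exp_pos _
    have hE' : E ≠ 0 := ne_of_gt hE0
    set A : ℝ := (1/(2*γ)) * (Real.log (a/dd) - (T - t) * (ν₀^2/a)) with hAdef
    set Bc : ℝ := (1/(2*γ*σ^2)) * ((T - t) * (dd/a)) with hBcdef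
    set P : ℝ := Real.exp (-γ * (E * V + A + Bc * (β - r)^2)) with hPdef
    have hP0 : 0 < P := by rw [hPdef]; exact Real.exp_pos _
    -- ∂_V as a function of (x,y)
    have hVfun : ∀ x y : ℝ, updV u t x y
        = γ * E * Real.exp (-γ * (E * x + A + Bc * (y - r)^2)) := by
      intro x y
      have h0 : HasDerivAt (fun z : ℝ => E * z + A + Bc * (y-r)^2) E x := by
        simpa using (((hasDerivAt_id x).const_mul E).add_const A).add_const (Bc*(y-r)^2)
      have h1 : HasDerivAt (fun z : ℝ => -γ * (E * z + A + Bc * (y-r)^2)) (-γ*E) x :=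
        h0.const_mul (-γ)
      have h2 := hasDerivAt_negexp h1
      have h3 : (fun z => u t z y)
          = fun z => -Real.exp (-γ * (E * z + A + Bc * (y - r)^2)) :=
        funext fun z => hut3 z y
      rw [updV, h3, h2.deriv]; ring
    have hVval : updV u t V β = γ * E * P := by rw [hVfun V β, hPdef]
    -- ∂²_{VV}
    have hVVval : updVV u t V β = -(γ^2 * E^2 * P) := by
      have h3 : (fun x => updV u t x β)
          = fun x => (γ * E) * Real.exp (-γ * (E * x + A + Bc * (β - r)^2)) :=
        funext fun x => hVfun x β
      have h0 : HasDerivAt (fun z : ℝ => E * z + A + Bc * (β-r)^2) E V := by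
        simpa using (((hasDerivAt_id V).const_mul E).add_const A).add_const (Bc*(β-r)^2)
      have h1 : HasDerivAt (fun x : ℝ => -γ * (E * x + A + Bc * (β-r)^2)) (-γ*E) V :=
        h0.const_mul (-γ)
      have h2 := hasDerivAt_mulexp (hasDerivAt_const V (γ*E)) h1
      rw [updVV, h3, h2.deriv, hPdef]; ring
    -- ∂_β as a function of y
    have hbfun : ∀ y : ℝ, updb u t V y
        = (2*γ*Bc*(y-r)) * Real.exp (-γ * (E * V + A + Bc * (y - r)^2)) := by
      intro y
      have hq : HasDerivAt (fun z : ℝ => (z - r)^2) (2*(y-r)^(2-1)*1) y :=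
        ((hasDerivAt_id y).sub_const r).pow 2
      have h1 : HasDerivAt (fun z : ℝ => -γ * (E * V + A + Bc * (z-r)^2))
          (-γ * (Bc * (2*(y-r)^(2-1)*1))) y :=
        ((hq.const_mul Bc).const_add (E*V + A)).const_mul (-γ)
      have h2 := hasDerivAt_negexp h1
      have h3 : (fun z => u t V z)
          = fun z => -Real.exp (-γ * (E * V + A + Bc * (z - r)^2)) :=
        funext fun z => hut3 V z
      rw [updb, h3, h2.deriv]; ring
    -- ∂²_{ββ}
    have hbbval : updbb u t V β = (2*γ*Bc - 4*γ^2*Bc^2*(β-r)^2) * P := by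
      have h3 : (fun y => updb u t V y)
          = fun y => ((2*γ*Bc)*(y-r)) * Real.exp (-γ * (E * V + A + Bc * (y - r)^2)) := by
        funext y; rw [hbfun y]
      have hf : HasDerivAt (fun y : ℝ => (2*γ*Bc)*(y-r)) ((2*γ*Bc)*1) β :=
        ((hasDerivAt_id β).sub_const r).const_mul (2*γ*Bc)
      have hq : HasDerivAt (fun z : ℝ => (z - r)^2) (2*(β-r)^(2-1)*1) β :=
        ((hasDerivAt_id β).sub_const r).pow 2
      have h1 : HasDerivAt (fun z : ℝ => -γ * (E * V + A + Bc * (z-r)^2))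
          (-γ * (Bc * (2*(β-r)^(2-1)*1))) β :=
        ((hq.const_mul Bc).const_add (E*V + A)).const_mul (-γ)
      have h2 := hasDerivAt_mulexp hf h1
      rw [updbb, h3, h2.deriv, hPdef]; ring
    -- ∂²_{Vβ}
    have hVbval : updVb u t V β = -(2*γ^2*E*Bc*(β-r)*P) := by
      have h3 : (fun y => updV u t V y)
          = fun y => (γ*E) * Real.exp (-γ * (E * V + A + Bc * (y - r)^2)) := by
        funext y; rw [hVfun V y]
      have hq : HasDerivAt (fun z : ℝ => (z - r)^2) (2*(β-r)^(2-1)*1) β :=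
        ((hasDerivAt_id β).sub_const r).pow 2
      have h1 : HasDerivAt (fun z : ℝ => -γ * (E * V + A + Bc * (z-r)^2))
          (-γ * (Bc * (2*(β-r)^(2-1)*1))) β :=
        ((hq.const_mul Bc).const_add (E*V + A)).const_mul (-γ)
      have h2 := hasDerivAt_mulexp (hasDerivAt_const β (γ*E)) h1
      rw [updVb, h3, h2.deriv, hPdef]; ring
    -- ∂_t
    have hutval : updt u t V β
        = γ * (-(r*E*V) + (1/(2*γ))*(ν₀^2/a - ν₀^2/dd)
            + (1/(2*γ*σ^2))*((T-t)*(ν₀^2/a) - dd/a)*(β-r)^2) * P := by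
      have hdd : HasDerivAt (fun s : ℝ => σ^2 + ν₀^2*s) (ν₀^2) t := by
        simpa using ((hasDerivAt_id t).const_mul (ν₀^2)).const_add (σ^2)
      have h0 : HasDerivAt (fun s : ℝ => r*(T-s)) (r * (0 - 1)) t :=
        ((hasDerivAt_const t T).sub (hasDerivAt_id t)).const_mul r
      have p1 : HasDerivAt (fun s : ℝ => Real.exp (r*(T-s)) * V)
          ((Real.exp (r*(T-t)) * (r * (0-1))) * V) t := h0.exp.mul_const V
      have hq : HasDerivAt (fun s : ℝ => a/(σ^2+ν₀^2*s))
          ((0 * (σ^2+ν₀^2*t) - a * ν₀^2)/(σ^2+ν₀^2*t)^2) t :=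
        (hasDerivAt_const t a).div hdd hdt'
      have haq : a/(σ^2+ν₀^2*t) ≠ 0 := div_ne_zero ha' hdt'
      have p2 := hq.log haq
      have p3 : HasDerivAt (fun s : ℝ => (T-s)*(ν₀^2/a)) ((0-1)*(ν₀^2/a)) t :=
        ((hasDerivAt_const t T).sub (hasDerivAt_id t)).mul_const (ν₀^2/a)
      have p4 : HasDerivAt (fun s : ℝ => (T-s)*((σ^2+ν₀^2*s)/a))
          ((0-1)*((σ^2+ν₀^2*t)/a) + (T-t)*(ν₀^2/a)) t :=
        ((hasDerivAt_const t T).sub (hasDerivAt_id t)).mul (hdd.div_const a)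
      have p5 := ((p1.fun_add ((p2.fun_sub p3).const_mul (1/(2*γ)))).fun_add
        ((p4.const_mul (1/(2*γ*σ^2))).mul_const ((β-r)^2))).const_mul (-γ)
      have h2 := hasDerivAt_negexp p5
      have h3 : (fun s => u s V β)
          = fun s => -Real.exp (-γ * (Real.exp (r*(T-s)) * V
            + (1/(2*γ)) * (Real.log (a/(σ^2+ν₀^2*s)) - (T - s) * (ν₀^2/a))
            + (1/(2*γ*σ^2)) * ((T - s) * ((σ^2+ν₀^2*s)/a)) * (β - r)^2)) :=
        funext fun s => hu' s V β
      rw [updt, h3, h2.deriv, hPdef, hEdef, hAdef, hBcdef]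
      rw [← hdddef]
      field_simp
      ring
    have hgt : g t = ν₀^2/dd := by rw [hg, hdddef]
    have hMs : Real.exp (-(r*(T-t))) * (g T / g t) * (β - r) / (γ*σ^2)
        = E⁻¹ * (dd/a) * (β-r) / (γ*σ^2) := by
      rw [Real.exp_neg, hgdiv', hEdef, hdddef]
    have hham : ∀ M, hamM σ r (g t) u t V β M
        = ((β-r)*M + r*V) * (γ*E*P) + (1/2)*σ^2*M^2*(-(γ^2*E^2*P))
          + σ^2*(ν₀^2/dd)*M*(-(2*γ^2*E*Bc*(β-r)*P)) := by
      intro M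
      rw [hamM, hVval, hVVval, hVbval, hgt]
    have hkey : ∀ M, hamM σ r (g t) u t V β (E⁻¹ * (dd/a) * (β-r) / (γ*σ^2))
          - hamM σ r (g t) u t V β M
        = (1/2)*σ^2*γ^2*E^2*P * (M - E⁻¹ * (dd/a) * (β-r) / (γ*σ^2))^2 := by
      intro M
      rw [hham, hham, hBcdef]
      field_simp [hγ', hσ', ha', hdt', hE']
      ring
    refine ⟨⟨⟨_, rfl⟩, ?_⟩, ?_⟩
    · rintro x ⟨M, rfl⟩
      rw [hMs]
      have h1 := hkey M
      have h2 : 0 ≤ (1/2)*σ^2*γ^2*E^2*P * (M - E⁻¹ * (dd/a) * (β-r) / (γ*σ^2))^2 := by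
        positivity
      linarith
    · rw [hMs, hutval, hbbval, hham, hgt, hBcdef]
      field_simp [hγ', hσ', ha', hdt', hE']
      ring
  · intro V β
    rw [hu]
    have hgT : g T / g T = 1 :=
      div_self (by rw [hg]; exact ne_of_gt (div_pos (pow_pos hν 2) ha))
    rw [hgT, Real.log_one]
    norm_num


end
end

section
/- Let γ > 0 with γ ≠ 1, let t′ ∈ [0,T), and let b ∈ C¹([t′,T]). Define d(t) = b(t) + 1/(σ²g(t)) for t ∈ [t′,T]. Then b satisfies the Riccati equation b′(t) + (1/γ)σ²g(t)²b(t)² + ((1−γ)/γ)(1/σ²) + 2((1−γ)/γ)g(t)b(t) = 0 on [t′,T] with terminal condition b(T) = 0 if and only if d satisfies the Bernoulli equation d′(t) + (1/γ)σ²g(t)²d(t)² − 2g(t)d(t) = 0 on [t′,T] with terminal condition d(T) = 1/(σ²g(T)). -/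
noncomputable section

open Set

set_option maxHeartbeats 1000000 in
theorem stmt6
    (T σ ν₀ γ t' : ℝ) (hT : 0 < T) (hσ : 0 < σ) (hν : 0 < ν₀)
    (hγ : 0 < γ) (hγ1 : γ ≠ 1) (ht' : t' ∈ Ico (0:ℝ) T)
    (g : ℝ → ℝ) (hg : ∀ t, g t = ν₀^2 / (σ^2 + ν₀^2 * t))
    (b : ℝ → ℝ)
    -- b ∈ C¹([t',T])
    (hb : ∀ t ∈ Icc t' T, DifferentiableAt ℝ b t)
    (hbC1 : ContinuousOn (deriv b) (Icc t' T))
    (d : ℝ → ℝ) (hd : ∀ t, d t = b t + 1/(σ^2 * g t)) :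
    -- b solves the Riccati equation with b(T)=0 iff d solves the
    -- Bernoulli equation with d(T)=1/(σ²g(T)).
    ((∀ t ∈ Icc t' T,
        deriv b t + (1/γ) * σ^2 * (g t)^2 * (b t)^2 + ((1-γ)/γ) * (1/σ^2)
          + 2 * ((1-γ)/γ) * g t * b t = 0)
      ∧ b T = 0)
    ↔
    ((∀ t ∈ Icc t' T,
        deriv d t + (1/γ) * σ^2 * (g t)^2 * (d t)^2 - 2 * g t * d t = 0)
      ∧ d T = 1/(σ^2 * g T)) := by
  have hσ2 : σ^2 ≠ 0 := by positivity
  have hν2 : ν₀^2 ≠ 0 := by positivity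
  have hγ0 : γ ≠ 0 := ne_of_gt hγ
  have key : ∀ t, d t = b t + (1/ν₀^2 + t/σ^2) := by
    intro t
    rw [hd t, hg t]
    by_cases hs : σ^2 + ν₀^2 * t = 0
    · have ht0 : t = -(σ^2)/ν₀^2 := by field_simp; linarith
      rw [hs, div_zero, mul_zero, div_zero, ht0]
      field_simp
      ring
    · field_simp
  have hdfun : d = fun t => b t + (1/ν₀^2 + t/σ^2) := funext key
  have hderiv : ∀ t ∈ Icc t' T, deriv d t = deriv b t + 1/σ^2 := by
    intro t ht
    have h1 : HasDerivAt (fun s : ℝ => 1/ν₀^2 + s/σ^2) (1/σ^2) t :=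
      HasDerivAt.const_add _ ((hasDerivAt_id t).div_const _)
    have h2 : HasDerivAt d (deriv b t + 1/σ^2) t := by
      rw [hdfun]
      exact ((hb t ht).hasDerivAt).add h1
    exact h2.deriv
  have hspos : ∀ t ∈ Icc t' T, σ^2 + ν₀^2 * t ≠ 0 := by
    intro t ht
    have : 0 ≤ t := le_trans ht'.1 ht.1
    positivity
  have heq : ∀ t ∈ Icc t' T,
      deriv d t + (1/γ) * σ^2 * (g t)^2 * (d t)^2 - 2 * g t * d t
        = deriv b t + (1/γ) * σ^2 * (g t)^2 * (b t)^2 + ((1-γ)/γ) * (1/σ^2)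
          + 2 * ((1-γ)/γ) * g t * b t := by
    intro t ht
    have hs := hspos t ht
    have h1 : 1/ν₀^2 + t/σ^2 = (σ^2 + ν₀^2 * t)/(σ^2*ν₀^2) := by
      field_simp
    rw [hderiv t ht, key t, hg t, h1]
    generalize hsv : σ^2 + ν₀^2 * t = s at hs ⊢
    field_simp
    ring
  have hT' : T ∈ Icc t' T := ⟨le_of_lt ht'.2, le_refl T⟩
  have hterm : d T = 1/(σ^2 * g T) ↔ b T = 0 := by
    rw [hd T]
    constructor
    · intro h; linarith
    · intro h; rw [h]; ring
  constructor
  · rintro ⟨h1, h2⟩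
    exact ⟨fun t ht => by rw [heq t ht]; exact h1 t ht, hterm.mpr h2⟩
  · rintro ⟨h1, h2⟩
    exact ⟨fun t ht => by rw [← heq t ht]; exact h1 t ht, hterm.mp h2⟩

end
end

section
/- Let γ > 0 with γ ≠ 1. Define t̃ = (1−γ)T − γσ²/ν₀², and define the interval I = [0,T] if t̃ < 0 (which holds exactly when γ > 1, or when γ < 1 and σ²/ν₀² > ((1−γ)/γ)T), and I = (t̃,T] otherwise. Define on I: a(t) = (γ/2)·log(γg(t)/((γ−1)g(t) + g(T))) + (1/2)·log(g(T)/g(t)) and b(t) = ((1−γ)/σ²)·(1/g(t))·(g(t)−g(T))/((γ−1)g(t) + g(T)). Then for all t ∈ I one has (γ−1)g(t) + g(T) > 0 (so a and b are well defined), a and b are C¹ on I, and they satisfy the system of ODEs a′(t) + (1/2)σ²g(t)²b(t) = 0 and b′(t) + (1/γ)σ²g(t)²b(t)² + ((1−γ)/γ)(1/σ²) + 2((1−γ)/γ)g(t)b(t) = 0 on I, with terminal conditions a(T) = 0 and b(T) = 0. -/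
noncomputable section

open Set

set_option maxHeartbeats 2000000 in
theorem stmt7
    (T σ ν₀ γ : ℝ) (hT : 0 < T) (hσ : 0 < σ) (hν : 0 < ν₀)
    (hγ : 0 < γ) (hγ1 : γ ≠ 1)
    (g : ℝ → ℝ) (hg : ∀ t, g t = ν₀^2 / (σ^2 + ν₀^2 * t))
    (ttil : ℝ) (httil : ttil = (1-γ) * T - γ * σ^2 / ν₀^2)
    (I : Set ℝ) (hI : I = if ttil < 0 then Icc (0:ℝ) T else Ioc ttil T)
    (a b : ℝ → ℝ)
    (ha : ∀ t, a t = (γ/2) * Real.log (γ * g t / ((γ-1) * g t + g T))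
                      + (1/2) * Real.log (g T / g t))
    (hb : ∀ t, b t = ((1-γ)/σ^2) * (1/(g t)) * (g t - g T) / ((γ-1) * g t + g T)) :
    -- characterization of the case t̃ < 0
    (ttil < 0 ↔ (1 < γ ∨ (γ < 1 ∧ σ^2/ν₀^2 > ((1-γ)/γ) * T)))
    ∧
    -- the denominators are positive on I (so a and b are well defined)
    (∀ t ∈ I, 0 < (γ-1) * g t + g T)
    ∧
    -- a and b are C¹ on I and satisfy the ODE system there
    (∀ t ∈ I,
      HasDerivAt a (-((1/2) * σ^2 * (g t)^2 * b t)) t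
      ∧ HasDerivAt b (-((1/γ) * σ^2 * (g t)^2 * (b t)^2 + ((1-γ)/γ) * (1/σ^2)
            + 2 * ((1-γ)/γ) * g t * b t)) t)
    ∧
    -- terminal conditions
    a T = 0 ∧ b T = 0 := by
  have hν2 : (0:ℝ) < ν₀^2 := by positivity
  obtain ⟨c, hc⟩ : ∃ c : ℝ, c = σ^2/ν₀^2 := ⟨_, rfl⟩
  have hcpos : 0 < c := by rw [hc]; positivity
  have httil' : ttil = (1-γ) * T - γ * c := by rw [httil, hc]; ring
  have hgeq : ∀ t : ℝ, c + t ≠ 0 → g t = 1/(c+t) := by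
    intro t ht
    have h1 : σ^2 + ν₀^2 * t = ν₀^2 * (c + t) := by rw [hc]; field_simp
    rw [hg, h1]
    field_simp
  have hcT : 0 < c + T := by linarith
  have hgT : g T = 1/(c+T) := hgeq T hcT.ne'
  have key : ∀ x : ℝ, c + x ≠ 0 →
      (γ-1) * (1/(c+x)) + 1/(c+T) = (x - ttil)/((c+x)*(c+T)) := by
    intro x hx
    rw [httil']
    field_simp
    ring
  have hIt : ∀ t ∈ I, ttil < t ∧ 0 ≤ t ∧ t ≤ T := by
    intro t ht
    rw [hI] at ht
    split_ifs at ht with h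
    · exact ⟨lt_of_lt_of_le h ht.1, ht.1, ht.2⟩
    · push_neg at h
      exact ⟨ht.1, le_trans h ht.1.le, ht.2⟩
  refine ⟨?_, ?_, ?_, ?_, ?_⟩
  · -- characterization
    rw [httil, ← hc]
    have hmul : γ * σ^2 / ν₀^2 = γ * c := by rw [hc]; ring
    constructor
    · intro h0
      rcases lt_or_gt_of_ne hγ1 with h | h
      · right
        refine ⟨h, ?_⟩
        rw [gt_iff_lt, div_mul_eq_mul_div, div_lt_iff₀ hγ]
        nlinarith [hmul]
      · left; exact h
    · rintro (h | ⟨h, h2⟩)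
      · nlinarith [hmul, mul_pos hγ hcpos]
      · rw [gt_iff_lt, div_mul_eq_mul_div, div_lt_iff₀ hγ] at h2
        nlinarith [hmul]
  · -- positivity of denominator
    intro t ht
    obtain ⟨h1, h2, _⟩ := hIt t ht
    have hct : 0 < c + t := by linarith
    rw [hgeq t hct.ne', hgT, key t hct.ne']
    exact div_pos (sub_pos.mpr h1) (mul_pos hct hcT)
  · -- derivatives
    intro t ht
    obtain ⟨h1, h2, h3⟩ := hIt t ht
    have hct : 0 < c + t := by linarith
    have hs : 0 < t - ttil := sub_pos.mpr h1
    -- explicit formula for b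
    have hbt : b t = ((1-γ)/σ^2) * ((c+t)*(T-t)/(t-ttil)) := by
      rw [hb, hgeq t hct.ne', hgT, key t hct.ne']
      field_simp
      ring
    -- eventual equalities
    have hevset : ∀ᶠ x in nhds t, ttil < x ∧ 0 < c + x := by
      filter_upwards [eventually_gt_nhds h1,
        eventually_gt_nhds (show -c < t by linarith)] with x hx1 hx2
      exact ⟨hx1, by linarith⟩
    have heva : a =ᶠ[nhds t]
        (fun x => (γ/2) * Real.log (γ*(c+T)/(x-ttil))
          + (1/2) * Real.log ((c+x)/(c+T))) := by
      filter_upwards [hevset] with x hx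
      obtain ⟨hx1, hx2⟩ := hx
      have hsx : 0 < x - ttil := sub_pos.mpr hx1
      rw [ha, hgeq x hx2.ne', hgT, key x hx2.ne']
      have e1 : γ * (1/(c+x)) / ((x - ttil)/((c+x)*(c+T))) = γ*(c+T)/(x-ttil) := by
        field_simp
      have e2 : (1/(c+T)) / (1/(c+x)) = (c+x)/(c+T) := by
        field_simp
      rw [e1, e2]
    have hevb : b =ᶠ[nhds t]
        (fun x => ((1-γ)/σ^2) * ((c+x)*(T-x)/(x-ttil))) := by
      filter_upwards [hevset] with x hx
      obtain ⟨hx1, hx2⟩ := hx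
      have hsx : 0 < x - ttil := sub_pos.mpr hx1
      rw [hb, hgeq x hx2.ne', hgT, key x hx2.ne']
      field_simp
      ring
    have hid : HasDerivAt (fun x : ℝ => x - ttil) 1 t := (hasDerivAt_id t).sub_const ttil
    constructor
    · -- derivative of a
      have hf1 : HasDerivAt (fun x : ℝ => γ*(c+T)/(x-ttil))
          ((0 * (t - ttil) - γ*(c+T) * 1)/(t-ttil)^2) t :=
        (hasDerivAt_const t (γ*(c+T))).div hid hs.ne'
      have hf1pos : γ*(c+T)/(t-ttil) ≠ 0 := by positivity
      have hl1 := hf1.log hf1pos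
      have hf2 : HasDerivAt (fun x : ℝ => (c+x)/(c+T)) (1/(c+T)) t := by
        have := ((hasDerivAt_id t).const_add c).div_const (c+T)
        simpa using this
      have hf2pos : (c+t)/(c+T) ≠ 0 := by positivity
      have hl2 := hf2.log hf2pos
      have hA := (hl1.const_mul (γ/2)).add (hl2.const_mul (1/2))
      have := hA.congr_of_eventuallyEq heva
      refine HasDerivAt.congr_deriv this ?_
      rw [hgeq t hct.ne', hbt, httil']
      have hs' : t - ((1-γ) * T - γ * c) ≠ 0 := by rw [← httil']; exact hs.ne'
      field_simp
      ring
    · -- derivative of b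
      have hnum : HasDerivAt (fun x : ℝ => (c+x)*(T-x))
          (1 * (T - t) + (c+t) * (0 - 1)) t :=
        (((hasDerivAt_id t).const_add c)).mul ((hasDerivAt_const t T).sub (hasDerivAt_id t))
      have hq := hnum.div hid hs.ne'
      have hB := hq.const_mul ((1-γ)/σ^2)
      have := hB.congr_of_eventuallyEq hevb
      refine HasDerivAt.congr_deriv this ?_
      rw [hgeq t hct.ne', hbt, httil']
      have hs' : t - ((1-γ) * T - γ * c) ≠ 0 := by rw [← httil']; exact hs.ne'
      field_simp
      ring
  · -- a T = 0
    rw [ha]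
    have hgT0 : g T ≠ 0 := by rw [hgT]; positivity
    have e1 : γ * g T / ((γ-1) * g T + g T) = 1 := by
      have : (γ-1) * g T + g T = γ * g T := by ring
      rw [this, div_self (mul_ne_zero hγ.ne' hgT0)]
    rw [e1, div_self hgT0]
    simp
  · -- b T = 0
    rw [hb]
    simp
end
end

section
/- Let n ≥ 1 and 0 < t₁ < t₂ < … < t_n. Define the n×n real matrix 𝔖 by 𝔖_{ij} = ν₀² t_i t_j + σ² min(t_i, t_j), the vector L ∈ ℝⁿ by L_i = ν₀² t_i, and the vector v ∈ ℝⁿ by v_i = 0 for i < n and v_n = ν₀²/(σ² + ν₀² t_n). Then vᵀ𝔖 = Lᵀ; consequently, if 𝔖 is invertible then Lᵀ𝔖⁻¹ = vᵀ and ν₀² − Lᵀ𝔖⁻¹L = σ²ν₀²/(σ² + ν₀² t_n). -/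
noncomputable section

open Matrix

theorem stmt10
    (σ ν₀ : ℝ) (hσ : 0 < σ) (hν : 0 < ν₀)
    (n : ℕ) (t : Fin (n+1) → ℝ)
    (ht0 : 0 < t 0) (htmono : StrictMono t)
    (S : Matrix (Fin (n+1)) (Fin (n+1)) ℝ)
    (hS : ∀ i j, S i j = ν₀^2 * t i * t j + σ^2 * min (t i) (t j))
    (L : Fin (n+1) → ℝ) (hL : ∀ i, L i = ν₀^2 * t i)
    (v : Fin (n+1) → ℝ)
    (hv : ∀ i, v i = if i = Fin.last n then ν₀^2 / (σ^2 + ν₀^2 * t (Fin.last n)) else 0) :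
    -- vᵀ 𝔖 = Lᵀ
    v ᵥ* S = L
    -- consequences when 𝔖 is invertible
    ∧ (IsUnit S.det →
        L ᵥ* S⁻¹ = v
        ∧ ν₀^2 - (L ᵥ* S⁻¹) ⬝ᵥ L = σ^2 * ν₀^2 / (σ^2 + ν₀^2 * t (Fin.last n))) := by
  have htlast : 0 < t (Fin.last n) := lt_of_lt_of_le ht0 (htmono.monotone (Fin.zero_le _))
  have hden : σ^2 + ν₀^2 * t (Fin.last n) ≠ 0 := by positivity
  have hmain : v ᵥ* S = L := by
    funext j
    have hsum : (v ᵥ* S) j = v (Fin.last n) * S (Fin.last n) j := by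
      simp only [vecMul, dotProduct]
      refine Finset.sum_eq_single (Fin.last n) (fun i _ hi => ?_) (by simp)
      simp [hv, hi]
    rw [hsum, hv, hL, hS, if_pos rfl]
    have hmin : min (t (Fin.last n)) (t j) = t j :=
      min_eq_right (htmono.monotone (Fin.le_last j))
    rw [hmin]
    field_simp
    ring
  refine ⟨hmain, fun hdet => ?_⟩
  have hLv : L ᵥ* S⁻¹ = v := by
    rw [← hmain, vecMul_vecMul, mul_nonsing_inv _ hdet, vecMul_one]
  refine ⟨hLv, ?_⟩
  rw [hLv]
  have : v ⬝ᵥ L = ν₀^2 / (σ^2 + ν₀^2 * t (Fin.last n)) * (ν₀^2 * t (Fin.last n)) := by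
    simp only [dotProduct]
    rw [Finset.sum_eq_single (Fin.last n) (fun i _ hi => by simp [hv, hi]) (by simp)]
    rw [hv, hL, if_pos rfl]
  rw [this]
  field_simp
  ring

end
end

section
/- Define a(t) = (1/(2γ))∫_t^T Tr(Σ⁻¹(Γ_s − Γ_T)) ds and B(t) = (1/γ)(Γ_t⁻¹ − Γ_t⁻¹Γ_TΓ_t⁻¹) for t ∈ [0,T]. Then a ∈ C¹([0,T]), B is a C¹ symmetric-matrix-valued function on [0,T], and (a,B) satisfies the system a′(t) + (1/2)Tr(Γ_tΣ⁻¹Γ_t B(t)) = 0 and B′(t) + (1/γ)Σ⁻¹ − Σ⁻¹Γ_tB(t) − B(t)Γ_tΣ⁻¹ = 0 on [0,T], with terminal conditions a(T) = 0 and B(T) = 0. -/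
noncomputable section

open Set Matrix

theorem stmt14
    (T γ : ℝ) (hT : 0 < T) (hγ : 0 < γ)
    (d : ℕ) (hd : 1 ≤ d)
    (Sm G0 : Matrix (Fin d) (Fin d) ℝ) (hSm : Sm.PosDef) (hG0 : G0.PosDef)
    (Γ : ℝ → Matrix (Fin d) (Fin d) ℝ)
    (hΓ : ∀ t, Γ t = (G0⁻¹ + t • Sm⁻¹)⁻¹)
    (a : ℝ → ℝ) (B : ℝ → Matrix (Fin d) (Fin d) ℝ)
    (ha : ∀ t, a t = (1/(2*γ)) * ∫ s in t..T, Matrix.trace (Sm⁻¹ * (Γ s - Γ T)))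
    (hB : ∀ t, B t = (1/γ) • ((Γ t)⁻¹ - (Γ t)⁻¹ * Γ T * (Γ t)⁻¹)) :
    -- a ∈ C¹([0,T]) and B is a C¹ symmetric-matrix-valued function on [0,T],
    -- and they satisfy the ODE system
    (∀ t ∈ Icc (0:ℝ) T,
      HasDerivAt a (-((1/2) * Matrix.trace (Γ t * Sm⁻¹ * Γ t * B t))) t
      ∧ (∀ i j, HasDerivAt (fun s => B s i j)
          ((-((1/γ) • Sm⁻¹ - Sm⁻¹ * Γ t * B t - B t * Γ t * Sm⁻¹)) i j) t)
      ∧ (B t).IsSymm)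
    -- the derivative functions are continuous on [0,T]
    ∧ ContinuousOn (fun t => -((1/2) * Matrix.trace (Γ t * Sm⁻¹ * Γ t * B t))) (Icc 0 T)
    ∧ (∀ i j, ContinuousOn
        (fun t => (-((1/γ) • Sm⁻¹ - Sm⁻¹ * Γ t * B t - B t * Γ t * Sm⁻¹)) i j) (Icc 0 T))
    -- terminal conditions
    ∧ a T = 0 ∧ B T = 0 := by
  classical
  set M : ℝ → Matrix (Fin d) (Fin d) ℝ := fun t => G0⁻¹ + t • Sm⁻¹ with hMdef
  set C : Matrix (Fin d) (Fin d) ℝ := Γ T with hCdef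
  -- positive definiteness and invertibility on [0, ∞)
  have hMpd : ∀ t : ℝ, 0 ≤ t → (M t).PosDef := by
    intro t ht
    refine Matrix.PosDef.add_posSemidef hG0.inv ?_
    refine ⟨?_, fun x => ?_⟩
    · show (t • Sm⁻¹)ᴴ = t • Sm⁻¹
      rw [conjTranspose_smul, hSm.inv.isHermitian]
      simp
    · exact (hSm.inv.posSemidef.smul ht).2 x
  have hMunit : ∀ t : ℝ, 0 ≤ t → IsUnit (M t).det := fun t ht =>
    ((hMpd t ht).det_pos.ne').isUnit
  have hMcont : Continuous M := by
    exact continuous_const.add (continuous_id.smul continuous_const)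
  -- the open set where M is invertible
  set U : Set ℝ := {s : ℝ | (M s).det ≠ 0} with hUdef
  have hUopen : IsOpen U := isOpen_compl_iff.mpr (isClosed_singleton.preimage hMcont.matrix_det)
  have hIccU : Icc (0:ℝ) T ⊆ U := fun s hs => ((hMpd s hs.1).det_pos.ne')
  have hUunit : ∀ s ∈ U, IsUnit (M s).det := fun s hs => isUnit_iff_ne_zero.mpr hs
  -- Γ as a continuous function on U
  have hΓeq : ∀ s, Γ s = ((M s).det)⁻¹ • (M s).adjugate := by
    intro s
    rw [hΓ s, Matrix.inv_def, Ring.inverse_eq_inv]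
  have hΓcont : ContinuousOn Γ U := by
    have : ContinuousOn (fun s => ((M s).det)⁻¹ • (M s).adjugate) U :=
      ((hMcont.matrix_det.continuousOn).inv₀ fun s hs => hs).smul
        hMcont.matrix_adjugate.continuousOn
    exact this.congr fun s _ => hΓeq s
  -- basic identities on U
  have hΓinvM : ∀ s, IsUnit (M s).det → (Γ s)⁻¹ = M s := by
    intro s hs
    rw [hΓ s]
    exact Matrix.nonsing_inv_nonsing_inv _ hs
  have hΓM : ∀ s, IsUnit (M s).det → Γ s * M s = 1 := by
    intro s hs; rw [hΓ s]; exact Matrix.nonsing_inv_mul _ hs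
  have hMΓ : ∀ s, IsUnit (M s).det → M s * Γ s = 1 := by
    intro s hs; rw [hΓ s]; exact Matrix.mul_nonsing_inv _ hs
  -- B as a polynomial on U
  have hBP : ∀ s, IsUnit (M s).det → B s = (1/γ) • (M s - M s * C * M s) := by
    intro s hs
    rw [hB s, hΓinvM s hs]
  -- the integrand
  set g : ℝ → ℝ := fun s => Matrix.trace (Sm⁻¹ * (Γ s - Γ T)) with hgdef
  have hgcont : ContinuousOn g U := by
    have houter : Continuous fun X : Matrix (Fin d) (Fin d) ℝ =>
        Matrix.trace (Sm⁻¹ * (X - Γ T)) :=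
      (continuous_const.matrix_mul (continuous_id.sub continuous_const)).matrix_trace
    exact houter.comp_continuousOn hΓcont
  -- trace identity
  have key : ∀ t, IsUnit (M t).det →
      Matrix.trace (Γ t * Sm⁻¹ * Γ t * B t) = (1/γ) * g t := by
    intro t hu
    have h1 : Γ t * M t = 1 := hΓM t hu
    have h2 : M t * Γ t = 1 := hMΓ t hu
    have h1' : ∀ X, Γ t * (M t * X) = X := fun X => by
      rw [← Matrix.mul_assoc, h1, Matrix.one_mul]
    rw [hBP t hu]
    have expand : Γ t * Sm⁻¹ * Γ t * (M t - M t * C * M t)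
        = Γ t * Sm⁻¹ - Γ t * (Sm⁻¹ * (C * M t)) := by
      simp only [Matrix.mul_sub, Matrix.mul_assoc, h1', h1, Matrix.mul_one]
    rw [Matrix.mul_smul, Matrix.trace_smul, expand, Matrix.trace_sub, smul_eq_mul]
    have t1 : Matrix.trace (Γ t * Sm⁻¹) = Matrix.trace (Sm⁻¹ * Γ t) :=
      Matrix.trace_mul_comm _ _
    have t2 : Matrix.trace (Γ t * (Sm⁻¹ * (C * M t))) = Matrix.trace (Sm⁻¹ * C) := by
      rw [Matrix.trace_mul_comm (Γ t) (Sm⁻¹ * (C * M t)), Matrix.mul_assoc,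
        Matrix.mul_assoc, h2, Matrix.mul_one]
    rw [t1, t2, hgdef]
    simp only [Matrix.mul_sub, Matrix.trace_sub, hCdef]
  -- entrywise derivative of M
  have hMentry : ∀ (t : ℝ) (i j : Fin d),
      HasDerivAt (fun s => (M s) i j) (Sm⁻¹ i j) t := by
    intro t i j
    have heq : (fun s => (M s) i j) = fun s => G0⁻¹ i j + s * Sm⁻¹ i j := by
      funext s
      simp [hMdef, Matrix.add_apply, Matrix.smul_apply, smul_eq_mul]
    rw [heq]
    simpa using ((hasDerivAt_id t).mul_const (Sm⁻¹ i j)).const_add (G0⁻¹ i j)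
  -- entrywise derivative of the quadratic part
  have hQ : ∀ (t : ℝ) (i j : Fin d),
      HasDerivAt (fun s => (M s * C * M s) i j)
        ((Sm⁻¹ * C * M t + M t * C * Sm⁻¹) i j) t := by
    intro t i j
    have heq : (fun s => (M s * C * M s) i j)
        = fun s => ∑ l, (∑ k, (M s) i k * C k l) * (M s) l j := by
      funext s
      simp [Matrix.mul_apply]
    rw [heq]
    have hder : HasDerivAt (fun s => ∑ l, (∑ k, (M s) i k * C k l) * (M s) l j)
        (∑ l, ((∑ k, Sm⁻¹ i k * C k l) * (M t) l j
          + (∑ k, (M t) i k * C k l) * Sm⁻¹ l j)) t := by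
      refine HasDerivAt.fun_sum fun l _ => ?_
      exact (HasDerivAt.fun_sum fun k _ => (hMentry t i k).mul_const (C k l)).mul (hMentry t l j)
    convert hder using 1
    simp [Matrix.add_apply, Matrix.mul_apply, Finset.sum_add_distrib]
  -- the matrix identity for the RHS of the B equation
  have hident : ∀ t, IsUnit (M t).det →
      -((1/γ) • Sm⁻¹ - Sm⁻¹ * Γ t * B t - B t * Γ t * Sm⁻¹)
        = (1/γ) • (Sm⁻¹ - (Sm⁻¹ * C * M t + M t * C * Sm⁻¹)) := by
    intro t hu
    have h1 : Γ t * M t = 1 := hΓM t hu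
    have h2 : M t * Γ t = 1 := hMΓ t hu
    have h1' : ∀ X, Γ t * (M t * X) = X := fun X => by
      rw [← Matrix.mul_assoc, h1, Matrix.one_mul]
    rw [hBP t hu]
    simp only [Matrix.mul_smul, Matrix.smul_mul, Matrix.mul_sub, Matrix.sub_mul,
      Matrix.mul_assoc, h1, h2, h1', Matrix.mul_one, Matrix.one_mul]
    module
  -- continuity of the matrix derivative expression
  have hcontD : Continuous (fun t =>
      ((1/γ) • (Sm⁻¹ - (Sm⁻¹ * C * M t + M t * C * Sm⁻¹)) : Matrix (Fin d) (Fin d) ℝ)) := by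
    apply Continuous.fun_const_smul
    exact continuous_const.sub ((continuous_const.matrix_mul hMcont).add
      ((hMcont.matrix_mul continuous_const).matrix_mul continuous_const))
  refine ⟨?_, ?_, ?_, ?_, ?_⟩
  · -- the ODE system
    intro t ht
    have hu : IsUnit (M t).det := hUunit t (hIccU ht)
    refine ⟨?_, ?_, ?_⟩
    · -- derivative of a
      have haf : a = fun u => (1/(2*γ)) * ∫ s in u..T, g s := funext ha
      have hsub : uIcc t T ⊆ U := by
        refine subset_trans ?_ hIccU
        rw [uIcc_of_le ht.2]
        exact Icc_subset_Icc ht.1 le_rfl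
      have hInt : IntervalIntegrable g MeasureTheory.volume t T :=
        (hgcont.mono hsub).intervalIntegrable
      have hmeas : StronglyMeasurableAtFilter g (nhds t) MeasureTheory.volume :=
        hgcont.stronglyMeasurableAtFilter hUopen t (hIccU ht)
      have hct : ContinuousAt g t := hgcont.continuousAt (hUopen.mem_nhds (hIccU ht))
      have h1 : HasDerivAt (fun u => ∫ s in u..T, g s) (-g t) t :=
        intervalIntegral.integral_hasDerivAt_left hInt hmeas hct
      have h2 : HasDerivAt a ((1/(2*γ)) * -g t) t := by
        rw [haf]
        exact h1.const_mul _
      convert h2 using 1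
      rw [key t hu]
      field_simp
    · -- derivative of B
      intro i j
      have hPij : HasDerivAt
          (fun s => ((1/γ) • (M s - M s * C * M s) : Matrix (Fin d) (Fin d) ℝ) i j)
          (((1/γ) • (Sm⁻¹ - (Sm⁻¹ * C * M t + M t * C * Sm⁻¹)) : Matrix (Fin d) (Fin d) ℝ) i j)
          t := by
        have hd := ((hMentry t i j).sub (hQ t i j)).const_mul (1/γ)
        have e1 : (fun s => ((1/γ) • (M s - M s * C * M s) : Matrix (Fin d) (Fin d) ℝ) i j)
            = fun s => (1/γ) * ((M s) i j - (M s * C * M s) i j) := by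
          funext s
          simp [Matrix.smul_apply, Matrix.sub_apply, smul_eq_mul]
        rw [e1]
        simpa [Matrix.smul_apply, Matrix.sub_apply, Matrix.add_apply, smul_eq_mul] using hd
      have hEv : (fun s => B s i j)
          =ᶠ[nhds t] (fun s => ((1/γ) • (M s - M s * C * M s) : Matrix (Fin d) (Fin d) ℝ) i j) := by
        filter_upwards [hUopen.mem_nhds (hIccU ht)] with s hs
        rw [hBP s (hUunit s hs)]
      rw [hident t hu]
      exact hPij.congr_of_eventuallyEq hEv
    · -- symmetry of B t
      have hSmS : Sm⁻¹ᵀ = Sm⁻¹ := by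
        rw [← conjTranspose_eq_transpose_of_trivial]
        exact hSm.inv.isHermitian
      have hMS : ∀ s : ℝ, (M s)ᵀ = M s := by
        intro s
        have h0 : G0⁻¹ᵀ = G0⁻¹ := by
          rw [← conjTranspose_eq_transpose_of_trivial]
          exact hG0.inv.isHermitian
        rw [hMdef]
        simp [transpose_add, transpose_smul, h0, hSmS]
      have hCS : Cᵀ = C := by
        rw [hCdef, hΓ T, ← conjTranspose_eq_transpose_of_trivial]
        exact ((hMpd T hT.le).inv).isHermitian
      rw [hBP t hu]
      show ((1/γ) • (M t - M t * C * M t) : Matrix (Fin d) (Fin d) ℝ)ᵀ = _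
      rw [transpose_smul, transpose_sub, transpose_mul, transpose_mul, hMS, hCS]
      simp only [Matrix.mul_assoc]
  · -- continuity of a'
    have hcg : ContinuousOn (fun t => (1/(2*γ)) * -g t) (Icc 0 T) :=
      (continuousOn_const.mul (hgcont.mono hIccU).neg)
    refine hcg.congr fun t htt => ?_
    rw [key t (hUunit t (hIccU htt))]
    field_simp
  · -- continuity of B'
    intro i j
    refine ((hcontD.matrix_elem i j).continuousOn).congr fun t htt => ?_
    rw [hident t (hUunit t (hIccU htt))]
  · -- a T = 0
    rw [ha T, intervalIntegral.integral_same, mul_zero]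
  · -- B T = 0
    have hu : IsUnit (M T).det := hMunit T hT.le
    rw [hB T, hΓinvM T hu]
    have : M T * Γ T * M T = M T := by rw [hMΓ T hu, Matrix.one_mul]
    rw [this]
    simp

end
end

section
/- Let γ > 0 with γ ≠ 1, and let t′ ∈ [0,T). Suppose a ∈ C¹([t′,T]) and B ∈ C¹([t′,T], S_d(ℝ)) (symmetric d×d matrix valued) satisfy the system a′(t) + (1/2)Tr(Γ_tΣ⁻¹Γ_t B(t)) = 0 and B′(t) + (1/γ)B(t)Γ_tΣ⁻¹Γ_tB(t) + ((1−γ)/γ)Σ⁻¹ + ((1−γ)/γ)Σ⁻¹Γ_tB(t) + ((1−γ)/γ)B(t)Γ_tΣ⁻¹ = 0 on [t′,T], with terminal conditions a(T) = 0 and B(T) = 0. Then the function φ(t,β) = a(t) + (1/2)(β−r·1⃗)ᵀB(t)(β−r·1⃗) satisfies, on [t′,T]×ℝ^d, the nonlinear PDE −(1/(1−γ))∂_tφ − (1/(2(1−γ)))Tr(Γ_tΣ⁻¹Γ_t ∂²_{ββ}φ) − (1/(2γ(1−γ)))(Γ_t∂_βφ)ᵀΣ⁻¹(Γ_t∂_βφ)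 − (1/(2γ))(β−r·1⃗)ᵀΣ⁻¹(β−r·1⃗) − (1/γ)(Γ_t∂_βφ)ᵀΣ⁻¹(β−r·1⃗) = 0 with terminal condition φ(T,β) = 0 for all β. -/
noncomputable section

open Set Matrix

/-- ∂ₜ for a function φ(t,β), β ∈ ℝ^d. -/
def mpdt {d : ℕ} (φ : ℝ → (Fin d → ℝ) → ℝ) (t : ℝ) (β : Fin d → ℝ) : ℝ :=
  deriv (fun s => φ s β) t
/-- Gradient in β of a function φ(t,β). -/
def mgrad {d : ℕ} (φ : ℝ → (Fin d → ℝ) → ℝ) (t : ℝ) (β : Fin d → ℝ) : Fin d → ℝ :=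
  fun i => deriv (fun x => φ t (Function.update β i x)) (β i)
/-- Hessian in β of a function φ(t,β). -/
def mhess {d : ℕ} (φ : ℝ → (Fin d → ℝ) → ℝ) (t : ℝ) (β : Fin d → ℝ) :
    Matrix (Fin d) (Fin d) ℝ :=
  Matrix.of fun i j => deriv (fun x => mgrad φ t (Function.update β j x) i) (β j)

/-- The vector β − r·1⃗. -/
def rsub {d : ℕ} (r : ℝ) (β : Fin d → ℝ) : Fin d → ℝ := fun i => β i - r

private lemma dotTA {d : ℕ} (A : Matrix (Fin d) (Fin d) ℝ) (x : Fin d → ℝ) :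
    x ⬝ᵥ Aᵀ *ᵥ x = x ⬝ᵥ A *ᵥ x := by
  rw [Matrix.mulVec_transpose, Matrix.dotProduct_mulVec, dotProduct_comm]

private lemma dotML {d : ℕ} (A : Matrix (Fin d) (Fin d) ℝ) (y z : Fin d → ℝ) :
    (A *ᵥ y) ⬝ᵥ z = y ⬝ᵥ (Aᵀ *ᵥ z) := by
  rw [Matrix.dotProduct_mulVec, Matrix.vecMul_transpose]

private lemma updDeriv {d : ℕ} (β : Fin d → ℝ) (i j : Fin d) (r : ℝ) :
    HasDerivAt (fun y => Function.update β i y j - r) (if j = i then 1 else 0) (β i) := by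
  rcases eq_or_ne j i with h | h
  · subst h
    simp only [Function.update_self, if_pos rfl]
    simpa using (hasDerivAt_id (β j)).sub_const r
  · simp only [Function.update_of_ne h, if_neg h]
    exact hasDerivAt_const _ _

private lemma quadDeriv {d : ℕ} (M : Matrix (Fin d) (Fin d) ℝ) (r : ℝ) (β : Fin d → ℝ) (i : Fin d) :
    HasDerivAt (fun y => rsub r (Function.update β i y) ⬝ᵥ M *ᵥ rsub r (Function.update β i y))
      ((M *ᵥ rsub r β) i + (Mᵀ *ᵥ rsub r β) i) (β i) := by
  have hinner : ∀ j : Fin d, HasDerivAt (fun y => ∑ k, M j k * (Function.update β i y k - r)) (M j i) (β i) := by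
    intro j
    have h := HasDerivAt.fun_sum (u := Finset.univ)
      (fun k (_ : k ∈ Finset.univ) => (updDeriv β i k r).const_mul (M j k))
    simpa [mul_ite] using h
  have h := HasDerivAt.fun_sum (u := Finset.univ)
    (fun j (_ : j ∈ Finset.univ) => ((updDeriv β i j r).mul (hinner j)))
  simp only [dotProduct, Matrix.mulVec, rsub]
  refine h.congr_deriv ?_
  simp [ite_mul, Function.update_eq_self, Finset.sum_add_distrib, transpose_apply, mul_comm]

theorem stmt17
    (T r γ t' : ℝ) (hT : 0 < T) (hγ : 0 < γ) (hγ1 : γ ≠ 1) (ht' : t' ∈ Ico (0:ℝ) T)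
    (d : ℕ) (hd : 1 ≤ d)
    (Sm G0 : Matrix (Fin d) (Fin d) ℝ) (hSm : Sm.PosDef) (hG0 : G0.PosDef)
    (Γ : ℝ → Matrix (Fin d) (Fin d) ℝ)
    (hΓ : ∀ t, Γ t = (G0⁻¹ + t • Sm⁻¹)⁻¹)
    (a a' : ℝ → ℝ) (B B' : ℝ → Matrix (Fin d) (Fin d) ℝ)
    -- a ∈ C¹([t',T]), B ∈ C¹([t',T], S_d(ℝ))
    (ha : ∀ t ∈ Icc t' T, HasDerivAt a (a' t) t)
    (hB : ∀ t ∈ Icc t' T, ∀ i j, HasDerivAt (fun s => B s i j) (B' t i j) t)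
    (ha' : ContinuousOn a' (Icc t' T))
    (hB' : ∀ i j, ContinuousOn (fun t => B' t i j) (Icc t' T))
    (hBsymm : ∀ t ∈ Icc t' T, (B t).IsSymm)
    -- the system of ODEs
    (hodea : ∀ t ∈ Icc t' T,
      a' t + (1/2) * Matrix.trace (Γ t * Sm⁻¹ * Γ t * B t) = 0)
    (hodeB : ∀ t ∈ Icc t' T,
      B' t + (1/γ) • (B t * Γ t * Sm⁻¹ * Γ t * B t)
        + ((1-γ)/γ) • Sm⁻¹
        + ((1-γ)/γ) • (Sm⁻¹ * Γ t * B t)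
        + ((1-γ)/γ) • (B t * Γ t * Sm⁻¹) = 0)
    -- terminal conditions
    (haT : a T = 0) (hBT : B T = 0)
    (φ : ℝ → (Fin d → ℝ) → ℝ)
    (hφ : ∀ (t : ℝ) (β : Fin d → ℝ),
      φ t β = a t + (1/2) * (rsub r β ⬝ᵥ (B t).mulVec (rsub r β))) :
    (∀ t ∈ Icc t' T, ∀ β : Fin d → ℝ,
      -(1/(1-γ)) * mpdt φ t β
        - (1/(2*(1-γ))) * Matrix.trace (Γ t * Sm⁻¹ * Γ t * mhess φ t β)
        - (1/(2*γ*(1-γ)))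
            * ((Γ t).mulVec (mgrad φ t β) ⬝ᵥ Sm⁻¹.mulVec ((Γ t).mulVec (mgrad φ t β)))
        - (1/(2*γ)) * (rsub r β ⬝ᵥ Sm⁻¹.mulVec (rsub r β))
        - (1/γ) * ((Γ t).mulVec (mgrad φ t β) ⬝ᵥ Sm⁻¹.mulVec (rsub r β)) = 0)
    ∧ (∀ β : Fin d → ℝ, φ T β = 0) := by
  have hγ0 : γ ≠ 0 := ne_of_gt hγ
  have h1γ : (1:ℝ) - γ ≠ 0 := sub_ne_zero.mpr (fun h => hγ1 h.symm)
  -- symmetry facts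
  have hsS : Sm⁻¹ᵀ = Sm⁻¹ := by
    have h1 : Smᵀ = Sm := by
      have := hSm.1
      rwa [Matrix.IsHermitian, Matrix.conjTranspose_eq_transpose_of_trivial] at this
    rw [Matrix.transpose_nonsing_inv, h1]
  have hsC : ∀ t, (Γ t)ᵀ = Γ t := by
    intro t
    have h0 : G0⁻¹ᵀ = G0⁻¹ := by
      have h1 : G0ᵀ = G0 := by
        have := hG0.1
        rwa [Matrix.IsHermitian, Matrix.conjTranspose_eq_transpose_of_trivial] at this
      rw [Matrix.transpose_nonsing_inv, h1]
    rw [hΓ, Matrix.transpose_nonsing_inv, Matrix.transpose_add, Matrix.transpose_smul, h0, hsS]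
  -- gradient
  have hgrad : ∀ s ∈ Icc t' T, ∀ β : Fin d → ℝ, mgrad φ s β = B s *ᵥ rsub r β := by
    intro s hs β
    funext i
    have hsM : (B s)ᵀ = B s := hBsymm s hs
    have hfun : (fun y => φ s (Function.update β i y))
        = fun y => a s + (1/2) * (rsub r (Function.update β i y) ⬝ᵥ (B s) *ᵥ rsub r (Function.update β i y)) :=
      funext fun y => hφ s _
    have hD := ((quadDeriv (B s) r β i).const_mul (1/2)).const_add (a s)
    rw [mgrad, hfun, hD.deriv, hsM]
    ring
  -- hessian
  have hhess : ∀ s ∈ Icc t' T, ∀ β : Fin d → ℝ, mhess φ s β = B s := by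
    intro s hs β
    ext i j
    have hfun : (fun y => mgrad φ s (Function.update β j y) i)
        = fun y => ∑ k, B s i k * (Function.update β j y k - r) := by
      funext y
      rw [hgrad s hs]
      simp [Matrix.mulVec, dotProduct, rsub]
    have hD := HasDerivAt.fun_sum (u := Finset.univ)
      (fun k (_ : k ∈ Finset.univ) => (updDeriv β j k r).const_mul (B s i k))
    rw [mhess, Matrix.of_apply, hfun, hD.deriv]
    simp [mul_ite]
  -- time derivative
  have hpdt : ∀ s ∈ Icc t' T, ∀ β : Fin d → ℝ,
      mpdt φ s β = a' s + (1/2) * (rsub r β ⬝ᵥ B' s *ᵥ rsub r β) := by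
    intro s hs β
    have h2 : HasDerivAt (fun u => rsub r β ⬝ᵥ B u *ᵥ rsub r β)
        (rsub r β ⬝ᵥ B' s *ᵥ rsub r β) s := by
      simp only [Matrix.mulVec, dotProduct]
      exact HasDerivAt.fun_sum fun i _ =>
        ((HasDerivAt.fun_sum fun j _ => (hB s hs i j).mul_const (rsub r β j)).const_mul (rsub r β i))
    have hfun : (fun u => φ u β) = fun u => a u + (1/2) * (rsub r β ⬝ᵥ B u *ᵥ rsub r β) :=
      funext fun u => hφ u β
    rw [mpdt, hfun]
    exact ((ha s hs).add (h2.const_mul (1/2))).deriv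
  refine ⟨?_, ?_⟩
  · intro t ht β
    have hsM : (B t)ᵀ = B t := hBsymm t ht
    have key := congrArg (fun P => rsub r β ⬝ᵥ P *ᵥ rsub r β) (hodeB t ht)
    simp only [Matrix.add_mulVec, Matrix.smul_mulVec, dotProduct_add, dotProduct_smul,
      Matrix.zero_mulVec, dotProduct_zero, smul_eq_mul] at key
    have e1 : a' t = -(1/2) * Matrix.trace (Γ t * Sm⁻¹ * Γ t * B t) := by
      have := hodea t ht; linarith
    rw [hpdt t ht β, hhess t ht β, hgrad t ht β]
    simp only [Matrix.mulVec_mulVec]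
    simp only [dotML]
    simp only [Matrix.transpose_mul, hsM, hsC t, hsS]
    simp only [Matrix.mulVec_mulVec]
    simp only [Matrix.mul_assoc] at key e1 ⊢
    have hswap : rsub r β ⬝ᵥ (Sm⁻¹ * (Γ t * B t)) *ᵥ rsub r β
        = rsub r β ⬝ᵥ (B t * (Γ t * Sm⁻¹)) *ᵥ rsub r β := by
      rw [show Sm⁻¹ * (Γ t * B t) = (B t * (Γ t * Sm⁻¹))ᵀ by
        simp [Matrix.transpose_mul, hsM, hsC t, hsS, Matrix.mul_assoc], dotTA]
    rw [hswap] at key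
    have e2 : rsub r β ⬝ᵥ B' t *ᵥ rsub r β
        = -((1/γ) * (rsub r β ⬝ᵥ (B t * (Γ t * (Sm⁻¹ * (Γ t * B t)))) *ᵥ rsub r β))
          - ((1-γ)/γ) * (rsub r β ⬝ᵥ Sm⁻¹ *ᵥ rsub r β)
          - 2 * (((1-γ)/γ) * (rsub r β ⬝ᵥ (B t * (Γ t * Sm⁻¹)) *ᵥ rsub r β)) := by
      linarith
    rw [e1, e2]
    field_simp
    ring
  · intro β
    rw [hφ, haT, hBT]
    simp
end
end
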